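/- arXiv:0905.0583 — 4 statements merged into one kernel-verified Lean document; each statement's English description precedes it below -/
import Mathlib

section
/- Let A be a unital C*-algebra, let k ≥ 1, and let g₁, …, g_k ∈ A be pairwise commuting elements with 0 ≤ gᵢ ≤ 1_A. In the C*-algebra M_k(A) of k×k matrices over A, the positive element diag(1_A − g₁g₂⋯g_k, 0, …, 0) is Cuntz subequivalent to the positive element diag(1_A − g₁, 1_A − g₂, …, 1_A − g_k). (This is the commuting-elements form of the Cuntz semigroup inequality [1 − d^{⊗k}] ≤ k·[(1 − d) ⊗ 1^{⊗(k−1)}] in W(D^{⊗k}) for a positive contraction d in a strongly self-absorbing C*-algebra D.) -/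
/-- Cuntz subequivalence of positive elements: `a ≾ b` iff there is a sequence `(xₖ)` with
`xₖ * b * xₖ* → a`.  On `Matrix (Fin k) (Fin k) A` the topology (the product topology) coincides
with the topology of the canonical C*-norm, so this is exactly the requirement
`‖xₖ * b * (xₖ)* - a‖ → 0`. -/
def CuntzSubequiv {C : Type*} [NonUnitalNonAssocSemiring C] [Star C] [TopologicalSpace C]
    (a b : C) : Prop :=
  ∃ x : ℕ → C, Filter.Tendsto (fun k => x k * b * star (x k)) Filter.atTop (nhds a)

/-!
STATEMENT 1: For a unital C*-algebra `A`, `k ≥ 1` and pairwise commuting `g₁, …, g_k ∈ A` with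
`0 ≤ gᵢ ≤ 1`, in `M_k(A)` one has `diag(1 - g₁⋯g_k, 0, …, 0) ≾ diag(1 - g₁, …, 1 - g_k)`.
-/
section helpers
variable {A : Type*} [CStarAlgebra A]

lemma commute_cfc_real (a b : A) (f : ℝ → ℝ) (ha : IsSelfAdjoint a) (hb : Commute b a) :
    Commute b (cfc f a) := by
  have key : ∀ gg : C(spectrum ℝ a, ℝ), Commute b (cfcHom ha gg) := by
    have hcont : Continuous (cfcHom ha (R := ℝ)) := (cfcHom_isClosedEmbedding ha).continuous
    have hclosed : IsClosed {gg : C(spectrum ℝ a, ℝ) | Commute b (cfcHom ha gg)} :=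
      isClosed_eq (continuous_const.mul hcont) (hcont.mul continuous_const)
    have hpoly : (polynomialFunctions (spectrum ℝ a) : Set C(spectrum ℝ a, ℝ)) ⊆
        {gg | Commute b (cfcHom ha gg)} := by
      intro gg hg
      rw [SetLike.mem_coe, polynomialFunctions, Subalgebra.mem_map] at hg
      obtain ⟨q, -, rfl⟩ := hg
      have h1 : cfcHom ha (Polynomial.toContinuousMapOnAlgHom (spectrum ℝ a) q)
          = cfc q.eval a := by
        rw [cfc_apply q.eval a ha (Polynomial.continuous q).continuousOn]
        congr 1
      have haev : ∀ p : Polynomial ℝ, Commute b (Polynomial.aeval a p) := by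
        intro p
        induction p using Polynomial.induction_on' with
        | add p q hp hq => rw [map_add]; exact hp.add_right hq
        | monomial n r =>
          rw [Polynomial.aeval_monomial]
          exact Commute.mul_right (Algebra.commutes r b).symm (hb.pow_right n)
      show Commute b (cfcHom ha (Polynomial.toContinuousMapOnAlgHom (spectrum ℝ a) q))
      rw [h1, cfc_polynomial q a ha]
      exact haev q
    intro gg
    have hmem : gg ∈ closure (polynomialFunctions (spectrum ℝ a) : Set C(spectrum ℝ a, ℝ)) := by
      rw [← Subalgebra.topologicalClosure_coe, polynomialFunctions.topologicalClosure]
      trivial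
    exact closure_minimal hpoly hclosed hmem
  by_cases hf : ContinuousOn f (spectrum ℝ a)
  · rw [cfc_apply f a ha hf]; exact key _
  · rw [cfc_apply_of_not_continuousOn a hf]; exact Commute.zero_right b

variable [PartialOrder A] [StarOrderedRing A]

lemma sqrt_mul_self_of_nonneg (a : A) (ha : 0 ≤ a) :
    cfc Real.sqrt a * cfc Real.sqrt a = a := by
  have h2 : cfc (fun x => Real.sqrt x * Real.sqrt x) a = cfc (id : ℝ → ℝ) a :=
    cfc_congr (fun x hx => Real.mul_self_sqrt (spectrum_nonneg_of_nonneg ha hx))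
  rw [← cfc_mul Real.sqrt Real.sqrt a, h2, cfc_id ℝ a]

lemma mul_nonneg_of_commute' {a b : A} (ha : 0 ≤ a) (hb : 0 ≤ b) (h : Commute a b) :
    0 ≤ a * b := by
  have hsa : IsSelfAdjoint (cfc Real.sqrt a) := cfc_predicate Real.sqrt a
  have hsb : Commute b (cfc Real.sqrt a) :=
    commute_cfc_real a b _ (IsSelfAdjoint.of_nonneg ha) h.symm
  have h0 : (0:A) ≤ cfc Real.sqrt a * b * cfc Real.sqrt a := by
    simpa [hsa.star_eq] using star_right_conjugate_nonneg hb (cfc Real.sqrt a)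
  have heq : a * b = cfc Real.sqrt a * b * cfc Real.sqrt a := by
    calc a * b = cfc Real.sqrt a * cfc Real.sqrt a * b := by
          rw [sqrt_mul_self_of_nonneg a ha]
      _ = cfc Real.sqrt a * (b * cfc Real.sqrt a) := by rw [mul_assoc, ← hsb.eq]
      _ = cfc Real.sqrt a * b * cfc Real.sqrt a := by rw [mul_assoc]
  rw [heq]
  exact h0

end helpers

lemma noncommProd_univ_ofFn {M : Type*} [Monoid M] {k : ℕ} (g : Fin k → M)
    (h : ((Finset.univ : Finset (Fin k)) : Set (Fin k)).Pairwise (Function.onFun Commute g)) :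
    Finset.univ.noncommProd g h = (List.ofFn g).prod := by
  simp_rw [Finset.noncommProd, Fin.univ_val_map, Multiset.noncommProd_coe]


theorem stmt_1 {A : Type*} [CStarAlgebra A] [PartialOrder A] [StarOrderedRing A]
    (k : ℕ) (hk : 1 ≤ k) (g : Fin k → A)
    (hcomm : ∀ i j, Commute (g i) (g j))
    (hg0 : ∀ i, 0 ≤ g i) (hg1 : ∀ i, g i ≤ 1) :
    CuntzSubequiv
      (Matrix.diagonal (fun i : Fin k =>
        if (i : ℕ) = 0 then 1 - Finset.univ.noncommProd g (fun a _ b _ _ => hcomm a b) else 0))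
      (Matrix.diagonal (fun i : Fin k => 1 - g i)) := by

  classical
  set q : ℕ → A := fun n => ((List.ofFn g).take n).prod with hq
  have hcomm_qg : ∀ (n : ℕ) (j : Fin k), Commute (q n) (g j) := by
    intro n j
    apply Commute.list_prod_left
    intro x hx
    obtain ⟨i, rfl⟩ := List.mem_ofFn.mp (List.mem_of_mem_take hx)
    exact hcomm i j
  have hstep : ∀ (n : ℕ) (hn : n < k), q (n + 1) = q n * g ⟨n, hn⟩ := by
    intro n hn
    have := List.prod_take_succ (List.ofFn g) n (by simpa using hn)
    simpa [hq] using this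
  have hqnn : ∀ n, 0 ≤ q n := by
    intro n
    induction n with
    | zero => simp [hq]
    | succ n ih =>
      by_cases hn : n < k
      · rw [hstep n hn]
        exact mul_nonneg_of_commute' ih (hg0 _) (hcomm_qg n _)
      · have hlen : (List.ofFn g).length ≤ n := by simpa using Nat.le_of_not_lt hn
        have : q (n + 1) = q n := by
          simp only [hq]
          rw [List.take_of_length_le hlen, List.take_of_length_le (hlen.trans (Nat.le_succ n))]
        rw [this]; exact ih
  set s : Fin k → A := fun i => cfc Real.sqrt (q i) with hs
  have hs_sa : ∀ i, IsSelfAdjoint (s i) := fun i => cfc_predicate Real.sqrt _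
  have hs_sq : ∀ i : Fin k, s i * s i = q i := fun i => sqrt_mul_self_of_nonneg _ (hqnn i)
  have hcomm_sg : ∀ i : Fin k, Commute (g i) (s i) := fun i =>
    commute_cfc_real _ _ _ (IsSelfAdjoint.of_nonneg (hqnn i)) (hcomm_qg i i).symm
  have hkey : ∀ i : Fin k, s i * (1 - g i) * s i = q i - q (i + 1) := by
    intro i
    have c : Commute (1 - g i) (s i) := (Commute.one_left (s i)).sub_left (hcomm_sg i)
    calc s i * (1 - g i) * s i = s i * ((1 - g i) * s i) := mul_assoc _ _ _
      _ = s i * (s i * (1 - g i)) := by rw [c.eq]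
      _ = s i * s i * (1 - g i) := (mul_assoc _ _ _).symm
      _ = q i * (1 - g i) := by rw [hs_sq]
      _ = q i - q (i + 1) := by rw [mul_sub, mul_one, hstep i i.isLt]
  set X : Matrix (Fin k) (Fin k) A :=
    Matrix.of (fun i j : Fin k => if (i : ℕ) = 0 then s j else 0) with hX
  have hmain : X * Matrix.diagonal (fun i => 1 - g i) * star X =
      Matrix.diagonal (fun i : Fin k =>
        if (i : ℕ) = 0 then 1 - Finset.univ.noncommProd g (fun a _ b _ _ => hcomm a b) else 0) := by
    ext i j
    rw [Matrix.mul_apply]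
    simp only [Matrix.mul_diagonal, Matrix.star_apply, Matrix.star_eq_conjTranspose]
    by_cases hi : (i : ℕ) = 0
    · by_cases hj : (j : ℕ) = 0
      · have hij : i = j := Fin.ext (hi.trans hj.symm)
        have hterm : ∀ l : Fin k,
            X i l * (1 - g l) * star (X j l) = q l - q (l + 1) := by
          intro l
          simp only [hX, Matrix.of_apply, hi, hj, if_true]
          rw [(hs_sa l).star_eq, hkey l]
        rw [Finset.sum_congr rfl (fun l _ => hterm l)]
        have hsum : ∑ l : Fin k, (q (l : ℕ) - q ((l : ℕ) + 1)) = q 0 - q k := by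
          rw [Fin.sum_univ_eq_sum_range (fun n => q n - q (n + 1)) k,
            Finset.sum_range_sub' q k]
        rw [hsum]
        have hq0 : q 0 = 1 := by simp [hq]
        have hqk : q k = (List.ofFn g).prod := by
          simp only [hq]
          rw [List.take_of_length_le (by simp)]
        rw [hq0, hqk, ← hij, Matrix.diagonal_apply_eq, if_pos hi]
        exact congrArg (1 - ·) (noncommProd_univ_ofFn g _).symm
      · have hij : i ≠ j := fun h => hj (h ▸ hi)
        rw [Matrix.diagonal_apply_ne _ hij]
        refine Finset.sum_eq_zero fun l _ => ?_
        simp [hX, hj]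
    · have : ∀ l : Fin k, X i l * (1 - g l) * star (X j l) = 0 := by
        intro l; simp [hX, hi]
      rw [Finset.sum_congr rfl (fun l _ => this l)]
      by_cases hij : i = j
      · rw [← hij, Matrix.diagonal_apply_eq, if_neg hi]; simp
      · rw [Matrix.diagonal_apply_ne _ hij]; simp
  exact ⟨fun _ => X, by simpa [hmain] using tendsto_const_nhds⟩
end

section
/- Let A be a unital C*-algebra, let n ≥ 1, and let f₁, …, fₙ, g₁, …, gₙ ∈ A satisfy: 0 ≤ fᵢ ≤ gᵢ ≤ 1_A and fᵢgᵢ = fᵢ for each i, and for all i ≠ j each of fᵢ, gᵢ commutes with each of fⱼ, gⱼ. Put aᵢ := (1_A − gᵢ)·∏_{j≠i} fⱼ. Then each aᵢ is positive, the aᵢ are pairwise orthogonal (aᵢaⱼ = 0 for i ≠ j), and Σ_{i=1}^{n} aᵢ ≤ 1_A − g₁g₂⋯gₙ. (This is the key estimate in the proof of Lemma 1.3: with fᵢ, gᵢ the i-th elementary-tensor copies of f and g in D^{⊗n}, it yields [(1−g)⊗f⊗⋯⊗f] + ⋯ + [f⊗⋯⊗f⊗(1−g)] ≤ [1 − g^{⊗n}].)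 -/
open scoped ComplexOrder

section Stmt2Aux

lemma stmt2_cfc_mem_elemental {A : Type*} [CStarAlgebra A] (a : A) [ha : IsStarNormal a]
    (F : ℂ → ℂ) : cfc F a ∈ StarAlgebra.elemental ℂ a := by
  by_cases hF : ContinuousOn F (spectrum ℂ a)
  · rw [cfc_apply F a, cfcHom_eq_of_isStarNormal]
    exact Subtype.coe_prop _
  · rw [cfc_apply_of_not_continuousOn a hF]
    exact zero_mem _

lemma stmt2_commute_cfc_of_commute {A : Type*} [CStarAlgebra A] {a b : A} [IsStarNormal a]
    (h1 : Commute b a) (h2 : Commute b (star a)) (F : ℂ → ℂ) :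
    Commute b (cfc F a) := by
  set S : StarSubalgebra ℂ A := StarSubalgebra.centralizer ℂ {b} with hS
  have hScoe : (S : Set A) = ⋂ m ∈ ({b} ∪ star {b} : Set A), {x | m * x = x * m} := by
    rw [hS, StarSubalgebra.coe_centralizer]
    ext x
    simp [Set.mem_centralizer_iff]
  have hSclosed : IsClosed (S : Set A) := by
    rw [hScoe]
    exact isClosed_biInter fun m _ => isClosed_eq (continuous_mul_left m) (continuous_mul_right m)
  have haS : a ∈ S := by
    rw [hS, StarSubalgebra.mem_centralizer_iff]
    rintro g rfl
    refine ⟨h1.eq, ?_⟩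
    have := congrArg star h2.eq
    simpa [mul_comm] using this.symm
  have hle := StarAlgebra.elemental.le_of_mem hSclosed haS
  have hmem := hle (stmt2_cfc_mem_elemental a F)
  rw [hS, StarSubalgebra.mem_centralizer_iff] at hmem
  exact (hmem b rfl).1

/-- The product of two commuting nonnegative elements of a C*-algebra is nonnegative. -/
lemma stmt2_mul_nonneg {A : Type*} [CStarAlgebra A] [PartialOrder A] [StarOrderedRing A]
    {a b : A} (hna : 0 ≤ a) (hnb : 0 ≤ b) (hab : Commute a b) : 0 ≤ a * b := by
  have hsa : IsSelfAdjoint a := .of_nonneg hna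
  have hnorm : IsStarNormal a := hsa.isStarNormal
  set F : ℂ → ℂ := fun z => (Real.sqrt z.re : ℂ) with hF
  have hFc : ContinuousOn F (spectrum ℂ a) :=
    (Complex.continuous_ofReal.comp (Real.continuous_sqrt.comp Complex.continuous_re)).continuousOn
  set s := cfc F a with hs
  have hstar : star s = s := by
    rw [hs, ← cfc_star F a]
    refine cfc_congr fun z _ => ?_
    simp [hF, Complex.conj_ofReal]
  have hss : s * s = a := by
    rw [hs, ← cfc_mul F F a hFc hFc]
    have key : ∀ z ∈ spectrum ℂ a, F z * F z = z := by
      intro z hz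
      have hz0 : 0 ≤ z := spectrum_nonneg_of_nonneg hna hz
      rw [Complex.le_def] at hz0
      obtain ⟨hre, him⟩ := hz0
      simp only [Complex.zero_re, Complex.zero_im] at hre him
      have hzre : z = (z.re : ℂ) := by
        apply Complex.ext <;> simp [← him]
      rw [hF]
      push_cast
      rw [← Complex.ofReal_mul, Real.mul_self_sqrt hre, ← hzre]
    rw [cfc_congr key, cfc_id' ℂ a]
  have hcsb : Commute b s :=
    stmt2_commute_cfc_of_commute hab.symm (by rw [hsa.star_eq]; exact hab.symm) F
  have h0 : 0 ≤ star s * b * s := star_left_conjugate_nonneg hnb s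
  rw [hstar] at h0
  rwa [mul_assoc, hcsb.eq, ← mul_assoc, hss] at h0

variable {A : Type*} [CStarAlgebra A] [PartialOrder A] [StarOrderedRing A] {ι : Type*}

lemma stmt2_mul_le_mul_left {x y z : A} (hz : 0 ≤ z) (hxy : x ≤ y)
    (hzx : Commute z x) (hzy : Commute z y) : z * x ≤ z * y := by
  have h := stmt2_mul_nonneg hz (sub_nonneg.2 hxy) (hzy.sub_right hzx)
  rw [mul_sub] at h
  exact sub_nonneg.1 h

lemma stmt2_mul_le_mul_right {x y z : A} (hz : 0 ≤ z) (hxy : x ≤ y)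
    (hxz : Commute x z) (hyz : Commute y z) : x * z ≤ y * z := by
  have h := stmt2_mul_nonneg (sub_nonneg.2 hxy) hz (hyz.sub_left hxz)
  rw [sub_mul] at h
  exact sub_nonneg.1 h

lemma stmt2_prod_nonneg (F : ι → A) (hF0 : ∀ i, 0 ≤ F i) (hc : ∀ i j, Commute (F i) (F j))
    (s : Finset ι) : 0 ≤ s.noncommProd F (fun p _ q _ _ => hc p q) := by
  induction s using Finset.cons_induction with
  | empty => exact (Finset.noncommProd_empty F _).symm ▸ zero_le_one
  | cons i s hi ih =>
    erw [Finset.noncommProd_cons]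
    exact stmt2_mul_nonneg (hF0 i) ih
      (Finset.noncommProd_commute _ _ _ _ fun j _ => hc i j)

lemma stmt2_prod_le_one (F : ι → A) (hF0 : ∀ i, 0 ≤ F i) (hF1 : ∀ i, F i ≤ 1)
    (hc : ∀ i j, Commute (F i) (F j)) (s : Finset ι) :
    s.noncommProd F (fun p _ q _ _ => hc p q) ≤ 1 := by
  induction s using Finset.cons_induction with
  | empty => exact le_of_eq (Finset.noncommProd_empty F _)
  | cons i s hi ih =>
    erw [Finset.noncommProd_cons]
    calc F i * s.noncommProd F (fun p _ q _ _ => hc p q) ≤ F i * 1 :=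
          stmt2_mul_le_mul_left (hF0 i) ih
            (Finset.noncommProd_commute _ _ _ _ fun j _ => hc i j) (Commute.one_right _)
      _ = F i := mul_one _
      _ ≤ 1 := hF1 i

lemma stmt2_prod_le_prod (F G : ι → A) (hF0 : ∀ i, 0 ≤ F i) (hFG : ∀ i, F i ≤ G i)
    (cFF : ∀ i j, Commute (F i) (F j)) (cFG : ∀ i j, Commute (F i) (G j))
    (cGG : ∀ i j, Commute (G i) (G j)) (s : Finset ι) :
    s.noncommProd F (fun p _ q _ _ => cFF p q) ≤
      s.noncommProd G (fun p _ q _ _ => cGG p q) := by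
  have hG0 : ∀ i, 0 ≤ G i := fun i => (hF0 i).trans (hFG i)
  induction s using Finset.cons_induction with
  | empty => exact le_rfl
  | cons i s hi ih =>
    erw [Finset.noncommProd_cons, Finset.noncommProd_cons]
    set P := s.noncommProd F (fun p _ q _ _ => cFF p q)
    set Q := s.noncommProd G (fun p _ q _ _ => cGG p q)
    have cFiP : Commute (F i) P := Finset.noncommProd_commute _ _ _ _ fun j _ => cFF i j
    have cFiQ : Commute (F i) Q := Finset.noncommProd_commute _ _ _ _ fun j _ => cFG i j
    have cGiQ : Commute (G i) Q := Finset.noncommProd_commute _ _ _ _ fun j _ => cGG i j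
    calc F i * P ≤ F i * Q := stmt2_mul_le_mul_left (hF0 i) ih cFiP cFiQ
      _ ≤ G i * Q := stmt2_mul_le_mul_right
            (stmt2_prod_nonneg G hG0 cGG s) (hFG i) cFiQ cGiQ

end Stmt2Aux




/-!
STATEMENT 2: Let `A` be a unital C*-algebra, `n ≥ 1`, and `f₁, …, fₙ, g₁, …, gₙ ∈ A` with
`0 ≤ fᵢ ≤ gᵢ ≤ 1`, `fᵢ gᵢ = fᵢ`, and, for `i ≠ j`, each of `fᵢ, gᵢ` commuting with each of
`fⱼ, gⱼ`.  Put `aᵢ := (1 - gᵢ) · ∏_{j ≠ i} fⱼ`.  Then each `aᵢ` is positive, the `aᵢ` are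
pairwise orthogonal, and `∑ᵢ aᵢ ≤ 1 - g₁⋯gₙ`.
-/
theorem stmt_2 {A : Type*} [CStarAlgebra A] [PartialOrder A] [StarOrderedRing A]
    (n : ℕ) (hn : 1 ≤ n) (f g : Fin n → A)
    (hf0 : ∀ i, 0 ≤ f i) (hfg : ∀ i, f i ≤ g i) (hg1 : ∀ i, g i ≤ 1)
    (hfgeq : ∀ i, f i * g i = f i)
    (hcomm : ∀ i j, i ≠ j →
      Commute (f i) (f j) ∧ Commute (f i) (g j) ∧
      Commute (g i) (f j) ∧ Commute (g i) (g j))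
    (a : Fin n → A)
    (ha : ∀ i, a i = (1 - g i) *
      (Finset.univ.erase i).noncommProd f
        (fun p _ q _ hpq => (hcomm p q hpq).1)) :
    (∀ i, 0 ≤ a i) ∧
    (∀ i j, i ≠ j → a i * a j = 0) ∧
    ∑ i, a i ≤
      1 - Finset.univ.noncommProd g (fun p _ q _ hpq => (hcomm p q hpq).2.2.2) := by
  -- basic facts
  have hg0 : ∀ i, 0 ≤ g i := fun i => (hf0 i).trans (hfg i)
  have hf1 : ∀ i, f i ≤ 1 := fun i => (hfg i).trans (hg1 i)
  have hsf : ∀ i, IsSelfAdjoint (f i) := fun i => .of_nonneg (hf0 i)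
  have hsg : ∀ i, IsSelfAdjoint (g i) := fun i => .of_nonneg (hg0 i)
  have hgf : ∀ i, g i * f i = f i := by
    intro i
    have := congrArg star (hfgeq i)
    rwa [star_mul, (hsf i).star_eq, (hsg i).star_eq] at this
  -- total commuting families
  have cff : ∀ i j, Commute (f i) (f j) := by
    intro i j
    rcases eq_or_ne i j with rfl | h
    · exact Commute.refl _
    · exact (hcomm i j h).1
  have cfg : ∀ i j, Commute (f i) (g j) := by
    intro i j
    rcases eq_or_ne i j with rfl | h
    · show f i * g i = g i * f i
      rw [hfgeq i, hgf i]
    · exact (hcomm i j h).2.1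
  have cgf : ∀ i j, Commute (g i) (f j) := fun i j => (cfg j i).symm
  have cgg : ∀ i j, Commute (g i) (g j) := by
    intro i j
    rcases eq_or_ne i j with rfl | h
    · exact Commute.refl _
    · exact (hcomm i j h).2.2.2
  -- products
  set P : Finset (Fin n) → A := fun s => s.noncommProd f (fun p _ q _ _ => cff p q) with hPdef
  set G : Finset (Fin n) → A := fun s => s.noncommProd g (fun p _ q _ _ => cgg p q) with hGdef
  have ha' : ∀ i, a i = (1 - g i) * P (Finset.univ.erase i) := ha
  have hP0 : ∀ s, 0 ≤ P s := fun s => stmt2_prod_nonneg f hf0 cff s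
  have hP1 : ∀ s, P s ≤ 1 := fun s => stmt2_prod_le_one f hf0 hf1 cff s
  have hPG : ∀ s, P s ≤ G s := fun s => stmt2_prod_le_prod f g hf0 hfg cff cfg cgg s
  have hG0 : ∀ s, 0 ≤ G s := fun s => stmt2_prod_nonneg g hg0 cgg s
  have hPinsert : ∀ (t : Finset (Fin n)) (k), k ∉ t → P (insert k t) = f k * P t := by
    intro t k hk
    simp only [hPdef]
    exact Finset.noncommProd_insert_of_notMem t k f _ hk
  have hPunion : ∀ {s t : Finset (Fin n)}, Disjoint s t → P (s ∪ t) = P s * P t := by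
    intro s t hst
    simp only [hPdef]
    exact Finset.noncommProd_union_of_disjoint hst f _
  have hu : ∀ i, (0 : A) ≤ 1 - g i := fun i => sub_nonneg.2 (hg1 i)
  have cuf : ∀ i j, Commute (1 - g i) (f j) :=
    fun i j => (Commute.one_left (f j)).sub_left (cgf i j)
  have cuP : ∀ i s, Commute (1 - g i) (P s) :=
    fun i s => Finset.noncommProd_commute _ _ _ _ fun j _ => cuf i j
  have cug : ∀ i j, Commute (1 - g i) (g j) :=
    fun i j => (Commute.one_left (g j)).sub_left (cgg i j)
  have cuG : ∀ i s, Commute (1 - g i) (G s) :=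
    fun i s => Finset.noncommProd_commute _ _ _ _ fun j _ => cug i j
  have cfP : ∀ i s, Commute (f i) (P s) :=
    fun i s => Finset.noncommProd_commute _ _ _ _ fun j _ => cff i j
  have cPP : ∀ s t, Commute (P s) (P t) :=
    fun s t => Finset.noncommProd_commute _ _ _ _ fun j _ => (cfP j s).symm
  -- positivity
  have hpos : ∀ i, 0 ≤ a i := by
    intro i
    rw [ha' i]
    exact stmt2_mul_nonneg (hu i) (hP0 _) (cuP i _)
  refine ⟨hpos, ?_, ?_⟩
  · -- orthogonality
    intro i j hij
    have him : i ∈ Finset.univ.erase j := Finset.mem_erase.2 ⟨hij, Finset.mem_univ i⟩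
    have hPj : P (Finset.univ.erase j) = f i * P ((Finset.univ.erase j).erase i) := by
      conv_lhs => rw [← Finset.insert_erase him]
      exact hPinsert _ i (Finset.notMem_erase i _)
    have huf : (1 - g i) * f i = 0 := by
      rw [sub_mul, one_mul, hgf i, sub_self]
    have cvfi : Commute (1 - g j) (f i) := cuf j i
    have cXfi : Commute (P (Finset.univ.erase i)) (f i) := (cfP i _).symm
    rw [ha' i, ha' j, hPj]
    calc (1 - g i) * P (Finset.univ.erase i) *
          ((1 - g j) * (f i * P ((Finset.univ.erase j).erase i)))
        = (1 - g i) * P (Finset.univ.erase i) *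
          (f i * ((1 - g j) * P ((Finset.univ.erase j).erase i))) := by rw [cvfi.left_comm]
      _ = (1 - g i) * (f i * (P (Finset.univ.erase i) *
          ((1 - g j) * P ((Finset.univ.erase j).erase i)))) := by
          rw [mul_assoc, cXfi.left_comm]
      _ = (1 - g i) * f i * (P (Finset.univ.erase i) *
          ((1 - g j) * P ((Finset.univ.erase j).erase i))) := by rw [← mul_assoc]
      _ = 0 := by rw [huf, zero_mul]
  · -- the sum estimate
    have hGcons : ∀ (t : Finset (Fin n)) (k) (h : k ∉ t),
        G (Finset.cons k t h) = g k * G t := by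
      intro t k h
      simp only [hGdef]
      exact Finset.noncommProd_cons t k g h _
    have key : ∀ s : Finset (Fin n), (∑ i ∈ s, a i) + G s ≤ 1 := by
      intro s
      induction s using Finset.cons_induction with
      | empty => simp [hGdef, Finset.noncommProd_empty]; exact le_rfl
      | cons i s hi ih =>
        rw [Finset.sum_cons, hGcons s i hi]
        have hsub : s ⊆ Finset.univ.erase i := by
          intro k hk
          exact Finset.mem_erase.2 ⟨fun h => hi (h ▸ hk), Finset.mem_univ k⟩
        have hdecomp : P (Finset.univ.erase i) = P s * P (Finset.univ.erase i \ s) := by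
          conv_lhs => rw [← Finset.union_sdiff_of_subset hsub]
          exact hPunion Finset.disjoint_sdiff
        have h1 : 0 ≤ (1 - g i) * P s := stmt2_mul_nonneg (hu i) (hP0 s) (cuP i s)
        have hstep : a i ≤ G s - g i * G s := by
          calc a i = (1 - g i) * P s * P (Finset.univ.erase i \ s) := by
                rw [ha' i, hdecomp, ← mul_assoc]
            _ ≤ (1 - g i) * P s * 1 :=
                stmt2_mul_le_mul_left h1 (hP1 _)
                  ((cuP i _).mul_left (cPP s _)) (Commute.one_right _)
            _ = (1 - g i) * P s := mul_one _
            _ ≤ (1 - g i) * G s :=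
                stmt2_mul_le_mul_left (hu i) (hPG s) (cuP i s) (cuG i s)
            _ = G s - g i * G s := by rw [sub_mul, one_mul]
        have h2 : a i + g i * G s ≤ G s := le_sub_iff_add_le.mp hstep
        calc (a i + ∑ x ∈ s, a x) + g i * G s
            = (∑ x ∈ s, a x) + (a i + g i * G s) := by abel
          _ ≤ (∑ x ∈ s, a x) + G s := add_le_add_right h2 _
          _ ≤ 1 := ih
    exact le_sub_iff_add_le.2 (key Finset.univ)
end

section
/- Let B be a unital C*-algebra and suppose there exists a unital *-homomorphism ρ : M₂(ℂ) → B. Let E be the C*-subalgebra of the C*-algebra C([0,1], M₂(B)) of continuous functions from [0,1] to the 2×2 matrices over B, consisting of those f such that f(0) lies in the image of the unital embedding B → M₂(B), b ↦ diag(b, b) (i.e., f(0) ∈ B ⊗ 1_{M₂}), and f(1) lies in the image of the unital embedding M₂(ℂ) → M₂(B) given by applying the unit of B entrywise to a scalar matrix (i.e., f(1) ∈ 1_B ⊗ M₂). Then there exists a unital *-homomorphism ρ̃ : M₂(ℂ) → E. -/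
set_option maxHeartbeats 1000000

namespace Stmt3Aux

open Matrix

variable {B : Type*} [CStarAlgebra B]

noncomputable section

variable (ρ : Matrix (Fin 2) (Fin 2) ℂ →⋆ₐ[ℂ] B)

/-- The image in `M₂(B)` of the "flip" unitary of `M₂(ℂ) ⊗ M₂(ℂ)`. -/
def U : Matrix (Fin 2) (Fin 2) B :=
  Matrix.of fun i j => ρ (Matrix.single j i 1)

/-- The entrywise embedding `M₂(ℂ) → M₂(B)`, `x ⊗ 1`. -/
def aM (x : Matrix (Fin 2) (Fin 2) ℂ) : Matrix (Fin 2) (Fin 2) B :=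
  x.map (algebraMap ℂ B)

lemma sum_diag_stdBasisMatrix :
    (∑ k : Fin 2, Matrix.single k k (1 : ℂ)) = 1 := by
  ext a b
  fin_cases a <;> fin_cases b <;>
    simp [Matrix.sum_apply, Fin.sum_univ_two, Matrix.single, Matrix.one_apply] <;> decide

lemma U_mul_U : U ρ * U ρ = 1 := by
  ext i j
  simp only [Matrix.mul_apply, U, Matrix.of_apply]
  have h1 : ∀ k : Fin 2, ρ (Matrix.single k i 1) * ρ (Matrix.single j k 1)
      = ρ (Matrix.single k i 1 * Matrix.single j k 1) := fun k => (map_mul ρ _ _).symm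
  simp only [h1]
  by_cases h : i = j
  · subst h
    simp only [Matrix.single_mul_single_same, one_mul]
    rw [Matrix.one_apply_eq, ← map_sum, sum_diag_stdBasisMatrix, _root_.map_one]
  · have h' : ∀ k : Fin 2, Matrix.single k i (1:ℂ) * Matrix.single j k 1 = 0 :=
      fun k => Matrix.single_mul_single_of_ne (c := (1:ℂ)) k i j h (1:ℂ)
    simp [h', Matrix.one_apply_ne h]

lemma star_U : star (U ρ) = U ρ := by
  ext i j
  rw [Matrix.star_apply]
  simp only [U, Matrix.of_apply]
  rw [← map_star]
  congr 1
  ext a b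
  simp only [Matrix.star_apply, Matrix.single, Matrix.of_apply]
  by_cases h1 : i = a <;> by_cases h2 : j = b <;> simp [h1, h2, and_comm]

lemma aM_mul (x y : Matrix (Fin 2) (Fin 2) ℂ) :
    (aM (x * y) : Matrix (Fin 2) (Fin 2) B) = aM x * aM y := by
  simp [aM, Matrix.map_mul]

lemma aM_one : (aM (1 : Matrix (Fin 2) (Fin 2) ℂ) : Matrix (Fin 2) (Fin 2) B) = 1 := by
  simp [aM, Matrix.map_one]

lemma aM_add (x y : Matrix (Fin 2) (Fin 2) ℂ) :
    (aM (x + y) : Matrix (Fin 2) (Fin 2) B) = aM x + aM y := by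
  simp [aM, Matrix.map_add]

lemma aM_zero : (aM (0 : Matrix (Fin 2) (Fin 2) ℂ) : Matrix (Fin 2) (Fin 2) B) = 0 := by
  simp [aM]

lemma aM_star (x : Matrix (Fin 2) (Fin 2) ℂ) :
    (aM (star x) : Matrix (Fin 2) (Fin 2) B) = star (aM x) := by
  ext i j
  simp only [aM, Matrix.map_apply, Matrix.star_apply]
  rw [← algebraMap_star_comm]

lemma aM_algebraMap (r : ℂ) :
    aM (algebraMap ℂ (Matrix (Fin 2) (Fin 2) ℂ) r)
      = algebraMap ℂ (Matrix (Fin 2) (Fin 2) B) r := by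
  ext i j
  simp [aM, Matrix.algebraMap_eq_diagonal, Matrix.diagonal, Matrix.map_apply,
    Matrix.of_apply, apply_ite (algebraMap ℂ B)]

/-- The key conjugation identity: `U (x ⊗ 1) U = 1 ⊗ x`. -/
lemma U_conj (x : Matrix (Fin 2) (Fin 2) ℂ) :
    U ρ * aM x * U ρ = Matrix.diagonal (fun _ => ρ x) := by
  ext i j
  simp only [Matrix.mul_apply, U, aM, Matrix.of_apply, Matrix.map_apply, Finset.sum_mul]
  have key : ∀ k l : Fin 2,
      ρ (Matrix.single k i 1) * algebraMap ℂ B (x k l) * ρ (Matrix.single j l 1)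
        = ρ (x k l • (Matrix.single k i 1 * Matrix.single j l 1)) := by
    intro k l
    rw [_root_.map_smul ρ, _root_.map_mul, Algebra.algebraMap_eq_smul_one, mul_smul_comm, mul_one,
      smul_mul_assoc]
  simp only [key]
  by_cases h : i = j
  · subst h
    simp only [Matrix.single_mul_single_same, one_mul, Matrix.diagonal_apply_eq]
    have hxsum : (∑ l : Fin 2, ∑ k : Fin 2, x k l • Matrix.single k l (1:ℂ)) = x := by
      simp only [smul_single, smul_eq_mul, mul_one]
      rw [Finset.sum_comm]
      exact (matrix_eq_sum_single x).symm
    calc ∑ l : Fin 2, ∑ k : Fin 2, ρ (x k l • Matrix.single k l (1:ℂ))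
        = ρ (∑ l : Fin 2, ∑ k : Fin 2, x k l • Matrix.single k l (1:ℂ)) := by
          rw [map_sum]
          exact Finset.sum_congr rfl fun l _ => (map_sum ρ _ _).symm
      _ = ρ x := by rw [hxsum]
  · have h' : ∀ k l : Fin 2, Matrix.single k i (1:ℂ) * Matrix.single j l 1 = 0 :=
      fun k l => Matrix.single_mul_single_of_ne (c := (1:ℂ)) k i j h (1:ℂ)
    simp [h', Matrix.diagonal_apply_ne _ h]

/-- The spectral projection of the flip. -/
def Q : Matrix (Fin 2) (Fin 2) B := (2:ℂ)⁻¹ • (1 - U ρ)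

lemma Q_mul_Q : Q ρ * Q ρ = Q ρ := by
  have h := U_mul_U ρ
  have expand : (1 - U ρ) * (1 - U ρ) = (2:ℕ) • (1 - U ρ) := by
    rw [mul_sub, mul_one, sub_mul, one_mul, h]
    abel
  rw [Q, smul_mul_smul_comm, expand]
  match_scalars <;> ring

lemma star_Q : star (Q ρ) = Q ρ := by
  simp [Q, star_smul, star_sub, star_U]

/-- The path parameter. -/
def c (t : ℝ) : ℂ := Complex.exp (((Real.pi * (1 - t) : ℝ) : ℂ) * Complex.I)

lemma star_c (t : ℝ) :
    star (c t) = Complex.exp (-(((Real.pi * (1 - t) : ℝ) : ℂ) * Complex.I)) := by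
  rw [c, Complex.star_def, ← Complex.exp_conj]
  congr 1
  simp [Complex.conj_ofReal]

lemma c_mul_star_c (t : ℝ) : c t * star (c t) = 1 := by
  rw [star_c, c, ← Complex.exp_add, add_neg_cancel, Complex.exp_zero]

lemma star_c_mul_c (t : ℝ) : star (c t) * c t = 1 := by
  rw [mul_comm]; exact c_mul_star_c t

lemma c_one : c 1 = 1 := by
  simp [c]

lemma c_zero : c 0 = -1 := by
  rw [c]
  norm_num [Complex.exp_pi_mul_I]

/-- The path of unitaries. -/
def w (t : ℝ) : Matrix (Fin 2) (Fin 2) B := 1 + (c t - 1) • Q ρ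

lemma star_w (t : ℝ) : star (w ρ t) = 1 + (star (c t) - 1) • Q ρ := by
  simp [w, star_add, star_smul, star_Q, star_sub]

lemma unit_aux (z : ℂ) (hz : z * star z = 1) :
    (1 + (z - 1) • Q ρ) * (1 + (star z - 1) • Q ρ) = 1 := by
  have hQ := Q_mul_Q ρ
  have hc : (star z - 1) + ((z - 1) + (z - 1) * (star z - 1)) = 0 := by
    linear_combination hz
  rw [add_mul, one_mul, mul_add, mul_one, smul_mul_smul_comm, hQ]
  calc 1 + (star z - 1) • Q ρ + ((z - 1) • Q ρ + ((z - 1) * (star z - 1)) • Q ρ)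
      = 1 + ((star z - 1) + ((z - 1) + (z - 1) * (star z - 1))) • Q ρ := by module
    _ = 1 := by rw [hc, zero_smul, add_zero]

lemma w_mul_star_w (t : ℝ) : w ρ t * star (w ρ t) = 1 := by
  rw [star_w, w]
  exact unit_aux ρ _ (c_mul_star_c t)

lemma star_w_mul_w (t : ℝ) : star (w ρ t) * w ρ t = 1 := by
  rw [star_w, w]
  have := unit_aux ρ (star (c t)) (by rw [star_star]; exact star_c_mul_c t)
  rwa [star_star] at this

lemma w_one : w ρ 1 = 1 := by
  simp [w, c_one]

lemma w_zero : w ρ 0 = U ρ := by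
  rw [w, c_zero, Q]
  have : ((-1 : ℂ) - 1) • ((2:ℂ)⁻¹ • ((1 : Matrix (Fin 2) (Fin 2) B) - U ρ))
      = -(1 - U ρ) := by
    match_scalars <;> ring
  rw [this]
  abel

lemma conj_mul (u A A' : Matrix (Fin 2) (Fin 2) B) (hu : star u * u = 1) :
    (u * A * star u) * (u * A' * star u) = u * (A * A') * star u := by
  calc (u * A * star u) * (u * A' * star u)
      = u * (A * ((star u * u) * (A' * star u))) := by simp only [mul_assoc]
    _ = u * (A * A') * star u := by rw [hu, one_mul]; simp only [mul_assoc]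

lemma continuous_c : Continuous fun t : Set.Icc (0:ℝ) 1 => c (t : ℝ) := by
  apply Complex.continuous_exp.comp
  fun_prop

lemma continuous_w : Continuous fun t : Set.Icc (0:ℝ) 1 => w ρ (t : ℝ) := by
  apply continuous_const.add
  exact ((continuous_c.sub continuous_const).smul continuous_const)

lemma continuous_star_w : Continuous fun t : Set.Icc (0:ℝ) 1 => star (w ρ (t : ℝ)) := by
  simp only [star_w]
  apply continuous_const.add
  exact (((continuous_star.comp continuous_c).sub continuous_const).smul continuous_const)

/-- The lifted homomorphism. -/
def ρtFun (x : Matrix (Fin 2) (Fin 2) ℂ) :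
    C(Set.Icc (0 : ℝ) 1, Matrix (Fin 2) (Fin 2) B) :=
  ⟨fun t => w ρ (t : ℝ) * aM x * star (w ρ (t : ℝ)),
    ((continuous_w ρ).matrix_mul continuous_const).matrix_mul (continuous_star_w ρ)⟩

def ρt : Matrix (Fin 2) (Fin 2) ℂ →⋆ₐ[ℂ]
    C(Set.Icc (0 : ℝ) 1, Matrix (Fin 2) (Fin 2) B) where
  toFun := ρtFun ρ
  map_one' := by
    refine ContinuousMap.ext fun t => ?_
    simp [ρtFun, aM_one, w_mul_star_w]
  map_mul' x y := by
    refine ContinuousMap.ext fun t => ?_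
    simp only [ρtFun, ContinuousMap.mul_apply, ContinuousMap.coe_mk, aM_mul]
    exact (conj_mul _ _ _ (star_w_mul_w ρ _)).symm
  map_zero' := by
    refine ContinuousMap.ext fun t => ?_
    simp [ρtFun, aM_zero]
  map_add' x y := by
    refine ContinuousMap.ext fun t => ?_
    simp [ρtFun, aM_add, mul_add, add_mul]
  commutes' r := by
    refine ContinuousMap.ext fun t => ?_
    simp only [ρtFun, ContinuousMap.coe_mk, aM_algebraMap]
    rw [Algebra.algebraMap_eq_smul_one (A := Matrix (Fin 2) (Fin 2) B), mul_smul_comm,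
      mul_one, smul_mul_assoc, w_mul_star_w]
    simp [Algebra.algebraMap_eq_smul_one]
  map_star' x := by
    refine ContinuousMap.ext fun t => ?_
    simp only [ρtFun, ContinuousMap.star_apply, ContinuousMap.coe_mk]
    rw [StarMul.star_mul, StarMul.star_mul, star_star, ← aM_star, mul_assoc]

lemma ρt_at_zero (x : Matrix (Fin 2) (Fin 2) ℂ) (h0 : (0:ℝ) ∈ Set.Icc (0:ℝ) 1) :
    ρt ρ x ⟨0, h0⟩ = Matrix.diagonal (fun _ => ρ x) := by
  show w ρ 0 * aM x * star (w ρ 0) = _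
  rw [w_zero, star_U, U_conj]

lemma ρt_at_one (x : Matrix (Fin 2) (Fin 2) ℂ) (h1 : (1:ℝ) ∈ Set.Icc (0:ℝ) 1) :
    ρt ρ x ⟨1, h1⟩ = x.map (algebraMap ℂ B) := by
  show w ρ 1 * aM x * star (w ρ 1) = _
  rw [w_one, star_one, one_mul, mul_one, aM]

end

end Stmt3Aux

theorem stmt_3 {B : Type*} [CStarAlgebra B]
    (ρ : Matrix (Fin 2) (Fin 2) ℂ →⋆ₐ[ℂ] B) :
    ∃ ρt : Matrix (Fin 2) (Fin 2) ℂ →⋆ₐ[ℂ]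
        C(Set.Icc (0 : ℝ) 1, Matrix (Fin 2) (Fin 2) B),
      ∀ x : Matrix (Fin 2) (Fin 2) ℂ,
        (∃ b : B, ρt x ⟨0, by constructor <;> norm_num⟩ = Matrix.diagonal (fun _ => b)) ∧
        (∃ y : Matrix (Fin 2) (Fin 2) ℂ,
          ρt x ⟨1, by constructor <;> norm_num⟩ = y.map (algebraMap ℂ B)) := by
  refine ⟨Stmt3Aux.ρt ρ, fun x => ⟨⟨ρ x, Stmt3Aux.ρt_at_zero ρ x _⟩,
    ⟨x, Stmt3Aux.ρt_at_one ρ x _⟩⟩⟩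
end

section
/- Let D and A be unital C*-algebras, let m ≥ 1, and let ι₁, …, ι_m : D → A be unital *-homomorphisms whose images pairwise commute (every element of ιᵢ(D) commutes with every element of ιⱼ(D) for i ≠ j). Let φ₀ : M₂(ℂ) → D be a completely positive contractive order zero map, and set h := φ₀(1_{M₂}). For k = 1, …, m define φ_k : M₂(ℂ) → A by φ_k(x) := (∏_{j=1}^{k-1} ιⱼ(1_D − h)) · ι_k(φ₀(x)). Then: (i) each φ_k is a completely positive contractive order zero map, and φ₁ = ι₁ ∘ φ₀; (ii) [φᵢ(M₂), φⱼ(M₂)] = 0 for i ≠ j; and (iii) 1_A − Σ_{k=1}^{m} φ_k(1_{M₂}) = ∏_{j=1}^{m} ιⱼ(1_D − h). (With A = D^{⊗m} and ιⱼ the j-th factor embedding, this is Proposition 2.4: φ_k = (1−h)^{⊗(k−1)} ⊗ φ₀ ⊗ 1^{⊗(m−k)} and 1 − Σφ_k(1) = (1−h)^{⊗m}.) -/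
open scoped Matrix.Norms.L2Operator

/-- An element of a matrix algebra over a star ring is declared positive if it is of the form
`yᴴ * y`; in a C*-algebra this is exactly positivity. -/
def MatPos {R : Type*} [NonUnitalSemiring R] [StarRing R] {n : ℕ}
    (x : Matrix (Fin n) (Fin n) R) : Prop :=
  ∃ y : Matrix (Fin n) (Fin n) R, x = y.conjTranspose * y

/-- `φ : M_k(ℂ) → A` is a completely positive contractive order zero map. -/
def IsCPCOrderZero {A : Type*} [NonUnitalNormedRing A] [StarRing A] [NormedSpace ℂ A]
    {k : ℕ} (φ : Matrix (Fin k) (Fin k) ℂ → A) : Prop :=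
  IsLinearMap ℂ φ ∧
  (∀ (n : ℕ) (x : Matrix (Fin n) (Fin n) (Matrix (Fin k) (Fin k) ℂ)),
      MatPos x → MatPos (x.map φ)) ∧
  (∀ x, ‖φ x‖ ≤ ‖x‖) ∧
  (∀ x y : Matrix (Fin k) (Fin k) ℂ, MatPos x → MatPos y → x * y = 0 → φ x * φ y = 0)

section Stmt6Aux

attribute [local instance] CStarAlgebra.spectralOrder CStarAlgebra.spectralOrderedRing

variable {D A : Type*} [CStarAlgebra D] [CStarAlgebra A]

/-- Positivity of images of `MatPos` elements under a completely positive map. -/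
lemma aux_nonneg_of_matpos (φ₀ : Matrix (Fin 2) (Fin 2) ℂ → D)
    (hcp : ∀ (n : ℕ) (x : Matrix (Fin n) (Fin n) (Matrix (Fin 2) (Fin 2) ℂ)),
      MatPos x → MatPos (x.map φ₀))
    {q : Matrix (Fin 2) (Fin 2) ℂ} (hq : MatPos q) : 0 ≤ φ₀ q := by
  obtain ⟨y, hy⟩ := hq
  have h1 : MatPos (Matrix.of ![![q]]) := by
    refine ⟨Matrix.of ![![y]], ?_⟩
    ext i j
    fin_cases i; fin_cases j
    simp [Matrix.mul_apply, Matrix.conjTranspose_apply, hy,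
      Matrix.star_eq_conjTranspose]
  obtain ⟨Z, hZ⟩ := hcp 1 (Matrix.of ![![q]]) h1
  have key : φ₀ q = star (Z 0 0) * Z 0 0 := by
    have := congrFun (congrFun hZ 0) 0
    simpa [Matrix.mul_apply, Matrix.conjTranspose_apply] using this
  rw [key]
  exact star_mul_self_nonneg _

/-- The image of `1` commutes with the image of any hermitian idempotent. -/
lemma aux_commute_one_proj (φ₀ : Matrix (Fin 2) (Fin 2) ℂ → D)
    (hφ₀ : IsCPCOrderZero φ₀) (q : Matrix (Fin 2) (Fin 2) ℂ)
    (hq1 : q * q = q) (hq2 : q.conjTranspose = q) :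
    Commute (φ₀ 1) (φ₀ q) := by
  obtain ⟨hlin, hcp, hcontr, hoz⟩ := hφ₀
  have hpq : MatPos q := ⟨q, by rw [hq2, hq1]⟩
  have hone : (1 : Matrix (Fin 2) (Fin 2) ℂ) - q = (1 - q).conjTranspose * (1 - q) := by
    have h2 : ((1 : Matrix (Fin 2) (Fin 2) ℂ) - q).conjTranspose = 1 - q := by
      rw [Matrix.conjTranspose_sub, Matrix.conjTranspose_one, hq2]
    rw [h2, sub_mul, mul_sub, mul_sub, hq1, one_mul, mul_one]
    simp
  have hp1q : MatPos ((1 : Matrix (Fin 2) (Fin 2) ℂ) - q) := ⟨1 - q, hone⟩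
  have hmul1 : q * (1 - q) = 0 := by rw [mul_sub, hq1, mul_one, sub_self]
  have hmul2 : (1 - q) * q = 0 := by rw [sub_mul, hq1, one_mul, sub_self]
  have o1 : φ₀ q * φ₀ (1 - q) = 0 := hoz _ _ hpq hp1q hmul1
  have o2 : φ₀ (1 - q) * φ₀ q = 0 := hoz _ _ hp1q hpq hmul2
  have hsplit : φ₀ 1 = φ₀ q + φ₀ (1 - q) := by
    rw [← hlin.map_add]; congr 1; abel
  show φ₀ 1 * φ₀ q = φ₀ q * φ₀ 1
  rw [hsplit, add_mul, mul_add, o1, o2, add_zero]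

/-- Decomposition of an arbitrary `2×2` complex matrix. -/
lemma aux_matrix_decomp (x : Matrix (Fin 2) (Fin 2) ℂ) :
    x = x 0 0 • !![(1:ℂ), 0; 0, 0] + x 1 1 • !![(0:ℂ), 0; 0, 1]
      + (x 0 1 + x 1 0) • !![(1/2 : ℂ), 1/2; 1/2, 1/2]
      + (Complex.I * (x 1 0 - x 0 1)) • !![(1/2 : ℂ), Complex.I/2; -Complex.I/2, 1/2]
      + ((x 0 1 * (Complex.I - 1) + x 1 0 * (-Complex.I - 1)) / 2) • 1 := by
  ext i j
  fin_cases i <;> fin_cases j <;>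
    simp [Matrix.one_apply] <;>
    ring_nf <;>
    simp [Complex.I_sq] <;>
    ring

/-- The image of `1` commutes with everything in the image of a c.p.c. order zero map. -/
lemma aux_commute_one (φ₀ : Matrix (Fin 2) (Fin 2) ℂ → D)
    (hφ₀ : IsCPCOrderZero φ₀) (x : Matrix (Fin 2) (Fin 2) ℂ) :
    Commute (φ₀ 1) (φ₀ x) := by
  have hlin := hφ₀.1
  have c0 : Commute (φ₀ 1) (φ₀ !![(1:ℂ), 0; 0, 0]) := by
    refine aux_commute_one_proj φ₀ hφ₀ _ ?_ ?_ <;>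
      ext i j <;> fin_cases i <;> fin_cases j <;>
      simp [Matrix.mul_apply, Fin.sum_univ_two, Matrix.conjTranspose_apply]
  have c1 : Commute (φ₀ 1) (φ₀ !![(0:ℂ), 0; 0, 1]) := by
    refine aux_commute_one_proj φ₀ hφ₀ _ ?_ ?_ <;>
      ext i j <;> fin_cases i <;> fin_cases j <;>
      simp [Matrix.mul_apply, Fin.sum_univ_two, Matrix.conjTranspose_apply]
  have c2 : Commute (φ₀ 1) (φ₀ !![(1/2 : ℂ), 1/2; 1/2, 1/2]) := by
    refine aux_commute_one_proj φ₀ hφ₀ _ ?_ ?_ <;>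
      ext i j <;> fin_cases i <;> fin_cases j <;>
      simp [Matrix.mul_apply, Fin.sum_univ_two, Matrix.conjTranspose_apply] <;>
      ring
  have c3 : Commute (φ₀ 1) (φ₀ !![(1/2 : ℂ), Complex.I/2; -Complex.I/2, 1/2]) := by
    refine aux_commute_one_proj φ₀ hφ₀ _ ?_ ?_ <;>
      ext i j <;> fin_cases i <;> fin_cases j <;>
      simp [Matrix.mul_apply, Fin.sum_univ_two, Matrix.conjTranspose_apply] <;>
      ring_nf <;> simp [Complex.I_sq] <;> ring
  rw [aux_matrix_decomp x, hlin.map_add, hlin.map_add, hlin.map_add, hlin.map_add,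
    hlin.map_smul, hlin.map_smul, hlin.map_smul, hlin.map_smul, hlin.map_smul]
  exact ((((c0.smul_right _).add_right (c1.smul_right _)).add_right
    (c2.smul_right _)).add_right (c3.smul_right _)).add_right
    ((Commute.refl (φ₀ 1)).smul_right _)

end Stmt6Aux

section Stmt6Main

attribute [local instance] CStarAlgebra.spectralOrder CStarAlgebra.spectralOrderedRing

variable {D A : Type*} [CStarAlgebra D] [CStarAlgebra A]

lemma aux_g {m : ℕ} (ι : Fin m → (D →⋆ₐ[ℂ] A))
    (hcomm : ∀ i j, i ≠ j → ∀ x y : D, Commute (ι i x) (ι j y))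
    (w c : D) (hc : star c = c) (hcsq : c * c = w) (hcn : ‖c‖ ≤ 1)
    (s : Finset (Fin m)) :
    ∃ g : A, star g = g ∧ ‖g‖ ≤ 1 ∧
      g * g = s.noncommProd (fun j => ι j w) (fun p _ q _ hpq => hcomm p q hpq _ _) ∧
      ∀ j ∉ s, ∀ d : D, Commute g (ι j d) := by
  classical
  induction s using Finset.induction_on with
  | empty =>
      refine ⟨1, star_one A, ?_, by rw [one_mul]; exact (Finset.noncommProd_empty _ _).symm, fun j _ d => Commute.one_left _⟩
      have h1 := CStarRing.norm_star_mul_self (x := (1 : A))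
      rw [star_one, mul_one] at h1
      nlinarith [norm_nonneg (1 : A)]
  | @insert a s ha ih =>
      obtain ⟨g, hgs, hgn, hgsq, hgc⟩ := ih
      have hga : Commute g (ι a c) := hgc a ha c
      refine ⟨ι a c * g, ?_, ?_, ?_, ?_⟩
      · rw [star_mul, hgs, ← map_star, hc, hga.eq]
      · calc ‖ι a c * g‖ ≤ ‖ι a c‖ * ‖g‖ := norm_mul_le _ _
          _ ≤ 1 := by
              have h2 : ‖ι a c‖ ≤ ‖c‖ := NonUnitalStarAlgHom.norm_apply_le (ι a) c
              nlinarith [norm_nonneg (ι a c), norm_nonneg g]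
      · have e : (ι a c * g) * (ι a c * g) = (ι a c * ι a c) * (g * g) := by
          rw [mul_assoc (ι a c) g (ι a c * g), ← mul_assoc g (ι a c) g, hga.eq,
            mul_assoc (ι a c) g g, ← mul_assoc]
        rw [e, ← map_mul, hcsq, hgsq, Finset.noncommProd_insert_of_notMem _ _ _ (fun p _ q _ hpq => hcomm p q hpq _ _) ha]
      · intro j hj d
        have hja : a ≠ j := fun e => hj (by simp [e])
        have hjs : j ∉ s := fun e => hj (Finset.mem_insert_of_mem e)
        exact (hcomm a j hja c d).mul_left (hgc j hjs d)

theorem stmt_6' (m : ℕ) (hm : 1 ≤ m)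
    (ι : Fin m → (D →⋆ₐ[ℂ] A))
    (hcomm : ∀ i j, i ≠ j → ∀ x y : D, Commute (ι i x) (ι j y))
    (φ₀ : Matrix (Fin 2) (Fin 2) ℂ → D) (hφ₀ : IsCPCOrderZero φ₀)
    (h : D) (hh : h = φ₀ 1)
    (φ : Fin m → (Matrix (Fin 2) (Fin 2) ℂ → A))
    (hφ : ∀ k x, φ k x =
      (Finset.Iio k).noncommProd (fun j => ι j (1 - h))
        (fun p _ q _ hpq => hcomm p q hpq _ _) * ι k (φ₀ x)) :
    (∀ k, IsCPCOrderZero (φ k)) ∧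
    (∀ x, φ ⟨0, Nat.lt_of_lt_of_le Nat.one_pos hm⟩ x = ι ⟨0, Nat.lt_of_lt_of_le Nat.one_pos hm⟩ (φ₀ x)) ∧
    (∀ i j, i ≠ j → ∀ x y, Commute (φ i x) (φ j y)) ∧
    1 - ∑ k, φ k 1 =
      Finset.univ.noncommProd (fun j => ι j (1 - h))
        (fun p _ q _ hpq => hcomm p q hpq _ _) := by
  classical
  obtain ⟨hlin, hcp, hcontr, hoz⟩ := hφ₀
  have h_nonneg : 0 ≤ h := by
    rw [hh]
    exact aux_nonneg_of_matpos φ₀ hcp ⟨1, by simp⟩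
  have h_norm : ‖h‖ ≤ 1 := by
    rw [hh]
    calc ‖φ₀ 1‖ ≤ ‖(1 : Matrix (Fin 2) (Fin 2) ℂ)‖ := hcontr 1
      _ = 1 := CStarRing.norm_one
  have h_le_one : h ≤ 1 := (CStarAlgebra.norm_le_one_iff_of_nonneg h h_nonneg).mp h_norm
  have hw_nonneg : (0 : D) ≤ 1 - h := sub_nonneg.mpr h_le_one
  have hw_le_one : (1 : D) - h ≤ 1 := by
    calc (1 : D) - h ≤ 1 - 0 := sub_le_sub_left h_nonneg 1
      _ = 1 := sub_zero 1
  have hw_norm : ‖(1 : D) - h‖ ≤ 1 :=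
    (CStarAlgebra.norm_le_one_iff_of_nonneg _ hw_nonneg).mpr hw_le_one
  have hr_nonneg : (0 : D) ≤ CFC.sqrt (1 - h) := CFC.sqrt_nonneg _
  have hr_star : star (CFC.sqrt ((1 : D) - h)) = CFC.sqrt ((1 : D) - h) :=
    (IsSelfAdjoint.of_nonneg hr_nonneg).star_eq
  have hr_sq : CFC.sqrt ((1 : D) - h) * CFC.sqrt ((1 : D) - h) = 1 - h :=
    CFC.sqrt_mul_sqrt_self _ hw_nonneg
  have hr_norm : ‖CFC.sqrt ((1 : D) - h)‖ ≤ 1 := by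
    have h2 : ‖star (CFC.sqrt ((1 : D) - h)) * CFC.sqrt ((1 : D) - h)‖ =
        ‖CFC.sqrt ((1 : D) - h)‖ * ‖CFC.sqrt ((1 : D) - h)‖ := CStarRing.norm_star_mul_self
    rw [hr_star, hr_sq] at h2
    nlinarith [norm_nonneg (CFC.sqrt ((1 : D) - h)), hw_norm]
  have hkey : ∀ x, Commute h (φ₀ x) := by
    intro x; rw [hh]; exact aux_commute_one φ₀ ⟨hlin, hcp, hcontr, hoz⟩ x
  have hGex : ∀ k : Fin m, ∃ g : A, star g = g ∧ ‖g‖ ≤ 1 ∧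
      g * g = (Finset.Iio k).noncommProd (fun j => ι j (1 - h))
        (fun p _ q _ hpq => hcomm p q hpq _ _) ∧
      ∀ d : D, Commute g (ι k d) := by
    intro k
    obtain ⟨g, h1, h2, h3, h4⟩ :=
      aux_g ι hcomm (1 - h) (CFC.sqrt ((1 : D) - h)) hr_star hr_sq hr_norm (Finset.Iio k)
    exact ⟨g, h1, h2, h3, fun d => h4 k (by simp) d⟩
  choose g hg1 hg2 hg3 hg4 using hGex
  have hPcomm : ∀ (k : Fin m) (d : D),
      Commute ((Finset.Iio k).noncommProd (fun j => ι j (1 - h))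
        (fun p _ q _ hpq => hcomm p q hpq _ _)) (ι k d) := by
    intro k d
    have := (hg4 k d).mul_left (hg4 k d)
    rwa [hg3 k] at this
  have hPnorm : ∀ k : Fin m, ‖(Finset.Iio k).noncommProd (fun j => ι j (1 - h))
      (fun p _ q _ hpq => hcomm p q hpq _ _)‖ ≤ 1 := by
    intro k
    rw [← hg3 k]
    calc ‖g k * g k‖ ≤ ‖g k‖ * ‖g k‖ := norm_mul_le _ _
      _ ≤ 1 := by nlinarith [norm_nonneg (g k), hg2 k]
  have swap : ∀ (P a b : A), Commute P a → (P * a) * (P * b) = (P * P) * (a * b) := by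
    intro P a b cP
    rw [mul_assoc P a (P * b), ← mul_assoc a P b, ← cP.eq, mul_assoc P a b, ← mul_assoc]
  refine ⟨?_, ?_, ?_, ?_⟩
  · -- (i) each φ k is c.p.c. order zero
    intro k
    refine ⟨⟨fun x y => ?_, fun c x => ?_⟩, fun n x hx => ?_, fun x => ?_,
      fun x y hx hy hxy => ?_⟩
    · rw [hφ, hφ, hφ, hlin.map_add, map_add, mul_add]
    · rw [hφ, hφ, hlin.map_smul, map_smul, mul_smul_comm]
    · -- complete positivity
      obtain ⟨y, hy⟩ := hcp n x hx
      refine ⟨Matrix.of fun i j => g k * ι k (y i j), ?_⟩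
      ext i j
      have hsumm : ∀ a b : D,
          star (g k * ι k a) * (g k * ι k b) = (g k * g k) * (ι k (star a) * ι k b) := by
        intro a b
        have c1 : Commute (g k) (ι k (star a)) := hg4 k (star a)
        rw [star_mul, hg1 k, ← map_star, ← c1.eq]
        exact swap _ _ _ c1
      have hyij : φ₀ (x i j) = ∑ l, star (y l i) * y l j := by
        have := congrFun (congrFun hy i) j
        simpa [Matrix.map_apply, Matrix.mul_apply, Matrix.conjTranspose_apply] using this
      rw [Matrix.map_apply, hφ, hyij, map_sum, Finset.mul_sum]
      simp only [Matrix.mul_apply, Matrix.conjTranspose_apply, Matrix.of_apply]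
      refine Finset.sum_congr rfl fun l _ => ?_
      rw [hsumm (y l i) (y l j), hg3 k, map_mul]
    · -- contractivity
      rw [hφ]
      have h2 : ‖ι k (φ₀ x)‖ ≤ ‖x‖ :=
        le_trans (NonUnitalStarAlgHom.norm_apply_le (ι k) (φ₀ x)) (hcontr x)
      have := mul_le_mul (hPnorm k) h2 (norm_nonneg _) zero_le_one
      simpa using le_trans (norm_mul_le _ _) this
    · -- order zero
      rw [hφ, hφ]
      have h0 : ι k (φ₀ x) * ι k (φ₀ y) = 0 := by
        rw [← map_mul, hoz x y hx hy hxy, map_zero]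
      rw [swap _ _ _ (hPcomm k (φ₀ x)), h0, mul_zero]
  · -- (i') φ₁ = ι₁ ∘ φ₀
    intro x
    have hzero : (Finset.Iio (⟨0, by omega⟩ : Fin m)) = ∅ := by
      ext j
      simp [Finset.mem_Iio, Fin.lt_def]
    rw [hφ, Finset.noncommProd_congr hzero (fun x _ => rfl) (fun p _ q _ hpq => hcomm p q hpq _ _)]; exact one_mul _
  · -- (ii) commuting images
    intro i j hij x y
    have base : ∀ (a b : Fin m) (u v : D), Commute u v → Commute (ι a u) (ι b v) := by
      intro a b u v huv
      rcases eq_or_ne a b with rfl | hab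
      · show ι a u * ι a v = ι a v * ι a u
        rw [← map_mul, ← map_mul, huv.eq]
      · exact hcomm a b hab u v
    have cφy : Commute ((1 : D) - h) (φ₀ y) := (Commute.one_left _).sub_left (hkey y)
    have cφx : Commute ((1 : D) - h) (φ₀ x) := (Commute.one_left _).sub_left (hkey x)
    rw [hφ, hφ]
    refine Commute.mul_left ?_ ?_
    · refine (Finset.noncommProd_commute _ _ _ _ fun l _ => Commute.mul_left ?_ ?_).symm
      · exact (Finset.noncommProd_commute _ _ _ _ fun l' _ =>
          base l l' _ _ (Commute.refl _)).symm
      · exact base j l _ _ cφy.symm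
    · refine Commute.mul_right ?_ (hcomm i j hij _ _)
      exact Finset.noncommProd_commute _ _ _ _ fun l _ => base i l _ _ cφx.symm
  · -- (iii) the telescoping identity
    obtain ⟨F, hFdef⟩ : ∃ F : ℕ → A, ∀ t, F t =
        (Finset.univ.filter (fun j : Fin m => (j : ℕ) < t)).noncommProd
          (fun j => ι j (1 - h)) (fun p _ q _ hpq => hcomm p q hpq _ _) :=
      ⟨_, fun t => rfl⟩
    have hF0 : F 0 = 1 := by
      have hempty : Finset.univ.filter (fun j : Fin m => (j : ℕ) < 0) = ∅ := by
        ext j; simp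
      rw [hFdef, Finset.noncommProd_congr hempty (fun x _ => rfl) (fun p _ q _ hpq => hcomm p q hpq _ _)]; exact Finset.noncommProd_empty _ _
    have hFm : F m = Finset.univ.noncommProd (fun j => ι j (1 - h))
        (fun p _ q _ hpq => hcomm p q hpq _ _) := by
      have huniv : Finset.univ.filter (fun j : Fin m => (j : ℕ) < m) = Finset.univ := by
        ext j; simpa using j.isLt
      rw [hFdef, Finset.noncommProd_congr huniv (fun x _ => rfl) (fun p _ q _ hpq => hcomm p q hpq _ _)]
    have hFs : ∀ k : Fin m, F ((k : ℕ) + 1) = F (k : ℕ) * ι k (1 - h) := by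
      intro k
      have hset : Finset.univ.filter (fun j : Fin m => (j : ℕ) < (k : ℕ) + 1)
          = insert k (Finset.univ.filter (fun j : Fin m => (j : ℕ) < (k : ℕ))) := by
        ext j
        simp only [Finset.mem_filter, Finset.mem_univ, true_and, Finset.mem_insert,
          Nat.lt_succ_iff_lt_or_eq, Fin.ext_iff]
        tauto
      rw [hFdef, hFdef, Finset.noncommProd_congr hset (fun x _ => rfl) (fun p _ q _ hpq => hcomm p q hpq _ _)]
      exact Finset.noncommProd_insert_of_notMem' _ _ _ _ (by simp)
    have hφk1 : ∀ k : Fin m, φ k 1 = F (k : ℕ) - F ((k : ℕ) + 1) := by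
      intro k
      have hIio : Finset.Iio k = Finset.univ.filter (fun j : Fin m => (j : ℕ) < (k : ℕ)) := by
        ext j
        simp only [Finset.mem_Iio, Finset.mem_filter, Finset.mem_univ, true_and, Fin.lt_def]
      rw [hφ, Finset.noncommProd_congr hIio (fun x _ => rfl) (fun p _ q _ hpq => hcomm p q hpq _ _), ← hFdef, ← hh, hFs k,
        map_sub, map_one, mul_sub, mul_one, sub_sub_cancel]
    have hsum : ∑ k : Fin m, φ k 1 = F 0 - F m := by
      calc ∑ k : Fin m, φ k 1 = ∑ k : Fin m, (F (k : ℕ) - F ((k : ℕ) + 1)) :=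
            Finset.sum_congr rfl (fun k _ => hφk1 k)
        _ = ∑ t ∈ Finset.range m, (F t - F (t + 1)) :=
            Fin.sum_univ_eq_sum_range (fun t => F t - F (t + 1)) m
        _ = F 0 - F m := Finset.sum_range_sub' F m
    rw [hsum, hF0, sub_sub_cancel, hFm]

end Stmt6Main


/-!
STATEMENT 6: Let `D`, `A` be unital C*-algebras, `m ≥ 1`, and `ι₁, …, ι_m : D → A` unital
*-homomorphisms with pairwise commuting images.  Let `φ₀ : M₂(ℂ) → D` be a c.p.c. order zero
map, `h := φ₀(1)`, and for `k = 1, …, m` set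
`φ_k(x) := (∏_{j<k} ιⱼ(1 - h)) · ι_k(φ₀(x))`.
Then (i) each `φ_k` is c.p.c. order zero and `φ₁ = ι₁ ∘ φ₀`; (ii) the images of the `φ_k`
pairwise commute; and (iii) `1 - ∑_k φ_k(1) = ∏_{j=1}^m ιⱼ(1 - h)`.
-/
theorem stmt_6 {D A : Type*} [CStarAlgebra D] [CStarAlgebra A]
    (m : ℕ) (hm : 1 ≤ m)
    (ι : Fin m → (D →⋆ₐ[ℂ] A))
    (hcomm : ∀ i j, i ≠ j → ∀ x y : D, Commute (ι i x) (ι j y))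
    (φ₀ : Matrix (Fin 2) (Fin 2) ℂ → D) (hφ₀ : IsCPCOrderZero φ₀)
    (h : D) (hh : h = φ₀ 1)
    (φ : Fin m → (Matrix (Fin 2) (Fin 2) ℂ → A))
    (hφ : ∀ k x, φ k x =
      (Finset.Iio k).noncommProd (fun j => ι j (1 - h))
        (fun p _ q _ hpq => hcomm p q hpq _ _) * ι k (φ₀ x)) :
    (∀ k, IsCPCOrderZero (φ k)) ∧
    (∀ x, φ ⟨0, by omega⟩ x = ι ⟨0, by omega⟩ (φ₀ x)) ∧
    (∀ i j, i ≠ j → ∀ x y, Commute (φ i x) (φ j y)) ∧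
    1 - ∑ k, φ k 1 =
      Finset.univ.noncommProd (fun j => ι j (1 - h))
        (fun p _ q _ hpq => hcomm p q hpq _ _) := by
  exact stmt_6' m hm ι hcomm φ₀ hφ₀ h hh φ hφ
end
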